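/- Let π ∈ S_{m,n} be decreasing, i.e. π(1) > π(2) > … > π(m). Then for every hybridization β ∈ {⊤,⊥}^m, G_π^β = ∏_{i=1}^m [ (A+B) · ∏_{j=1}^{π(i)−1} (A + x_i − y_j) · ∏_{j=π(i)+1}^{n} (B − x_i + y_j) ]. -/

import Mathlib

/-! # Hybrid generic pipe dreams -/

/-- Tiles: sets of pipe segments in a unit cell. `wn` = {W–N}, `se` = {S–E},
`wnse` = {W–N, S–E}, `en` = {E–N}, `sw` = {S–W}, `ensw` = {E–N, S–W}, `we` = {W–E},
`sn` = {S–N}, `wesn` = {W–E, S–N} (crossing), `blank` = ∅. -/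
inductive Tile
  | blank | wn | se | wnse | en | sw | ensw | we | sn | wesn
  deriving DecidableEq

instance : Fintype Tile where
  elems := {.blank, .wn, .se, .wnse, .en, .sw, .ensw, .we, .sn, .wesn}
  complete := by intro x; cases x <;> simp

namespace Tile

/-- The West edge is occupied. -/
def occW : Tile → Bool
  | wn | wnse | we | wesn | sw | ensw => true
  | _ => false

/-- The East edge is occupied. -/
def occE : Tile → Bool
  | se | wnse | we | wesn | en | ensw => true
  | _ => false

/-- The North edge is occupied. -/
def occN : Tile → Bool
  | wn | wnse | sn | wesn | en | ensw => true
  | _ => false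

/-- The South edge is occupied. -/
def occS : Tile → Bool
  | se | wnse | sn | wesn | sw | ensw => true
  | _ => false

/-- Elbow tiles. -/
def isElbow : Tile → Bool
  | wn | se | wnse | en | sw | ensw => true
  | _ => false

/-- Straight tiles. -/
def isStraight : Tile → Bool
  | we | sn | wesn => true
  | _ => false

/-- Left-right mirror image of a tile (exchanging the roles of the E and W edges). -/
def mirror : Tile → Tile
  | wn => en | en => wn | se => sw | sw => se | wnse => ensw | ensw => wnse
  | t => t

end Tile

/-- The allowed tiles in a row of type `⊤` (`true`) resp. `⊥` (`false`). -/
def allowedIn (rt : Bool) (t : Tile) : Prop :=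
  if rt then
    t = .blank ∨ t = .wn ∨ t = .se ∨ t = .wnse ∨ t = .we ∨ t = .sn ∨ t = .wesn
  else
    t = .blank ∨ t = .en ∨ t = .sw ∨ t = .ensw ∨ t = .we ∨ t = .sn ∨ t = .wesn

section Routing

variable {ι : Type*}

/-- In a `⊤`-row tile, the pipe exiting East given the pipes entering from West and South. -/
def eOutT : Tile → Option ι → Option ι → Option ι
  | .se, _, s => s
  | .wnse, _, s => s
  | .we, w, _ => w
  | .wesn, w, _ => w
  | _, _, _ => none

/-- In a `⊤`-row tile, the pipe exiting North given the pipes entering from West and South. -/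
def nOutT : Tile → Option ι → Option ι → Option ι
  | .wn, w, _ => w
  | .wnse, w, _ => w
  | .sn, _, s => s
  | .wesn, _, s => s
  | _, _, _ => none

/-- Tracing a `⊤`-type row left to right: the pipe on the vertical edge left of column `j`,
where `bot j` is the pipe entering column `j` from the South and `enter` enters from the West. -/
def hTrace (t : ℕ → Tile) (bot : ℕ → Option ι) (enter : Option ι) : ℕ → Option ι
  | 0 => enter
  | j + 1 => eOutT (t j) (hTrace t bot enter j) (bot j)

/-- The pipe exiting North from column `j` of a `⊤`-type row. -/
def topOutT (t : ℕ → Tile) (bot : ℕ → Option ι) (enter : Option ι) (j : ℕ) : Option ι :=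
  nOutT (t j) (hTrace t bot enter j) (bot j)

/-- The pipe exiting North from column `j` of a `⊥`-type row with `n` columns (the pipe
`enter` enters from the East); computed by mirroring. -/
def topOutB (n : ℕ) (t : ℕ → Tile) (bot : ℕ → Option ι) (enter : Option ι) (j : ℕ) :
    Option ι :=
  topOutT (fun j' => (t (n - 1 - j')).mirror) (fun j' => bot (n - 1 - j')) enter (n - 1 - j)

/-- The pipe exiting North from column `j` of a row of type `rt`. -/
def rowTop (rt : Bool) (n : ℕ) (t : ℕ → Tile) (bot : ℕ → Option ι) (enter : Option ι)
    (j : ℕ) : Option ι :=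
  if rt then topOutT t bot enter j else topOutB n t bot enter j

end Routing

/-- The row-`i` tiles of a filling, as a `ℕ`-indexed family. -/
def tilesOf {m n : ℕ} (f : Fin m → Fin n → Tile) (i : Fin m) : ℕ → Tile :=
  fun j => if h : j < n then f i ⟨j, h⟩ else Tile.blank

/-- The pipes (labeled by the row in which they enter) crossing the horizontal line `m - r`
of the grid (so `r = 0` is the South boundary and `r = m` the North boundary). -/
def lineState (m n : ℕ) (β : Fin m → Bool) (f : Fin m → Fin n → Tile) :
    ℕ → ℕ → Option (Fin m)
  | 0, _ => none
  | r + 1, j =>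
    if h : r < m then
      rowTop (β ⟨m - 1 - r, by omega⟩) n (tilesOf f ⟨m - 1 - r, by omega⟩)
        (fun j' => lineState m n β f r j') (some ⟨m - 1 - r, by omega⟩) j
    else lineState m n β f r j

/-- The pipe exiting through the North boundary at column `j`. -/
def northExit (m n : ℕ) (β : Fin m → Bool) (f : Fin m → Fin n → Tile) (j : Fin n) :
    Option (Fin m) :=
  lineState m n β f m (j : ℕ)

private theorem filter_card_lt {m : ℕ} (i : Fin m) (p : Fin m → Prop) [DecidablePred p]
    (h : ∀ a, p a → a ≠ i) : (Finset.univ.filter p).card < m := by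
  have hsub : Finset.univ.filter p ⊆ Finset.univ.erase i := fun a ha =>
    Finset.mem_erase.mpr ⟨h a (Finset.mem_filter.mp ha).2, Finset.mem_univ a⟩
  calc (Finset.univ.filter p).card ≤ (Finset.univ.erase i).card := Finset.card_le_card hsub
    _ < Finset.univ.card := Finset.card_erase_lt_of_mem (Finset.mem_univ i)
    _ = m := by simp

/-- The number `φ_β(i)` (0-indexed) of the pipe entering in row `i`: pipes are numbered
counterclockwise starting from the NW corner. -/
def pipeNo {m : ℕ} (β : Fin m → Bool) (i : Fin m) : Fin m :=
  if hβ : β i then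
    ⟨(Finset.univ.filter (fun a => a < i ∧ β a)).card,
      filter_card_lt i _ (fun a ha => ne_of_lt ha.1)⟩
  else
    ⟨(Finset.univ.filter (fun a : Fin m => β a)).card +
        (Finset.univ.filter (fun a : Fin m => i < a ∧ ¬(β a : Prop))).card, by
      have hd : Disjoint (Finset.univ.filter (fun a : Fin m => (β a : Prop)))
          (Finset.univ.filter (fun a : Fin m => i < a ∧ ¬(β a : Prop))) := by
        rw [Finset.disjoint_left]
        intro a ha hb
        exact (Finset.mem_filter.mp hb).2.2 (Finset.mem_filter.mp ha).2
      rw [← Finset.card_union_of_disjoint hd, ← Finset.filter_or]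
      refine filter_card_lt i _ ?_
      rintro a (h1 | ⟨h2, _⟩)
      · rintro rfl; exact hβ h1
      · exact ne_of_gt h2⟩

/-- A hybrid generic pipe dream of type `β`: allowed tiles, matching of occupied edges,
unoccupied South boundary, and entering conditions on the West/East boundaries. -/
def IsHGPD (m n : ℕ) (β : Fin m → Bool) (f : Fin m → Fin n → Tile) : Prop :=
  (∀ i j, allowedIn (β i) (f i j)) ∧
  (∀ (i : Fin m) (j : Fin n) (h : (j : ℕ) + 1 < n),
    (f i j).occE = (f i ⟨j + 1, h⟩).occW) ∧
  (∀ (i : Fin m) (h : (i : ℕ) + 1 < m) (j : Fin n),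
    (f i j).occS = (f ⟨i + 1, h⟩ j).occN) ∧
  (∀ (i : Fin m) (j : Fin n), (i : ℕ) + 1 = m → (f i j).occS = false) ∧
  (∀ (i : Fin m) (j : Fin n), (j : ℕ) = 0 → (f i j).occW = β i) ∧
  (∀ (i : Fin m) (j : Fin n), (j : ℕ) + 1 = n → (f i j).occE = !β i)

/-- The pipe dream has connectivity `π`: the pipe numbered `k` exits the North side in
column `π(k)`; equivalently the pipe entering in row `i` exits in column `π(φ_β(i))`. -/
def Connectivity (m n : ℕ) (β : Fin m → Bool) (f : Fin m → Fin n → Tile)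
    (π : Fin m ↪ Fin n) : Prop :=
  ∀ i : Fin m, northExit m n β f (π (pipeNo β i)) = some i

/-! ## Weights -/

/-- Variable set for `ℤ[x_1,…,x_m,y_1,…,y_n,A,B]`: `none` is `B`, `some (inl i)` is `x_i`,
`some (inr (inl j))` is `y_j`, `some (inr (inr ()))` is `A`. -/
abbrev PDVar (m n : ℕ) := Option (Fin m ⊕ (Fin n ⊕ Unit))

noncomputable def xP (m n : ℕ) (i : Fin m) : MvPolynomial (PDVar m n) ℤ :=
  MvPolynomial.X (some (Sum.inl i))

noncomputable def yP (m n : ℕ) (j : Fin n) : MvPolynomial (PDVar m n) ℤ :=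
  MvPolynomial.X (some (Sum.inr (Sum.inl j)))

noncomputable def AP (m n : ℕ) : MvPolynomial (PDVar m n) ℤ :=
  MvPolynomial.X (some (Sum.inr (Sum.inr ())))

noncomputable def BP (m n : ℕ) : MvPolynomial (PDVar m n) ℤ :=
  MvPolynomial.X none

/-- The weight of the tile in cell `(i,j)` of a row of type `rt` whose entering pipe is
numbered `k`. -/
noncomputable def tileWt (m n : ℕ) (rt : Bool) (t : Tile) (k : Fin m) (j : Fin n) :
    MvPolynomial (PDVar m n) ℤ :=
  if t.isElbow then AP m n + BP m n
  else if t.isStraight then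
    (if rt then AP m n + xP m n k - yP m n j else BP m n - xP m n k + yP m n j)
  else
    (if rt then BP m n - xP m n k + yP m n j else AP m n + xP m n k - yP m n j)

/-- The weight of a pipe dream: the product of the weights of its tiles. -/
noncomputable def pdWeight (m n : ℕ) (β : Fin m → Bool) (f : Fin m → Fin n → Tile) :
    MvPolynomial (PDVar m n) ℤ :=
  ∏ i : Fin m, ∏ j : Fin n, tileWt m n (β i) (f i j) (pipeNo β i) j

open Classical in
/-- The generic pipe dream polynomial `G_π^β`: the sum of the weights of all hybrid generic
pipe dreams of type `β` with connectivity `π`. -/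
noncomputable def GPD (m n : ℕ) (β : Fin m → Bool) (π : Fin m ↪ Fin n) :
    MvPolynomial (PDVar m n) ℤ :=
  ∑ f ∈ Finset.univ.filter
      (fun f : Fin m → Fin n → Tile => IsHGPD m n β f ∧ Connectivity m n β f π),
    pdWeight m n β f

/-! ### Auxiliary development for the main theorem -/

section Aux

open Finset

variable {m n : ℕ} {β : Fin m → Bool} {π : Fin m ↪ Fin n}

theorem pipeNo_lt_of_top {i r : Fin m} (h : i < r) (hi : β i = true) :
    pipeNo β i < pipeNo β r := by
  have hilt : (Finset.univ.filter (fun a => a < i ∧ β a)).card <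
      (Finset.univ.filter (fun a : Fin m => (β a : Prop))).card := by
    apply Finset.card_lt_card
    constructor
    · intro a ha
      simp only [Finset.mem_filter, Finset.mem_univ, true_and] at ha ⊢
      exact ha.2
    · intro hsup
      have := hsup (by simp [hi] : i ∈ Finset.univ.filter (fun a : Fin m => (β a : Prop)))
      simp at this
  rcases hr : β r with _ | _
  · -- β r = false
    simp only [pipeNo, hi, hr, dif_pos, dif_neg, Bool.false_eq_true, not_false_iff]
    rw [Fin.lt_def]
    simp only []
    calc (Finset.univ.filter (fun a => a < i ∧ β a)).card
        < (Finset.univ.filter (fun a : Fin m => (β a : Prop))).card := hilt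
      _ ≤ _ := Nat.le_add_right _ _
  · -- β r = true
    simp only [pipeNo, hi, hr, dif_pos]
    rw [Fin.lt_def]
    dsimp only [Fin.val_mk]
    apply Finset.card_lt_card
    constructor
    · intro a ha
      simp only [Finset.mem_filter, Finset.mem_univ, true_and] at ha ⊢
      exact ⟨lt_trans ha.1 h, ha.2⟩
    · intro hsup
      have := hsup (by simp [h, hi] : i ∈ Finset.univ.filter (fun a => a < r ∧ β a))
      simp at this

theorem pipeNo_lt_of_bot {i r : Fin m} (h : i < r) (hi : β i = false) :
    pipeNo β r < pipeNo β i := by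
  rcases hr : β r with _ | _
  · -- β r = false
    simp only [pipeNo, hi, hr, dif_neg, Bool.false_eq_true, not_false_iff]
    rw [Fin.lt_def]
    simp only []
    apply Nat.add_lt_add_left
    apply Finset.card_lt_card
    constructor
    · intro a ha
      simp only [Finset.mem_filter, Finset.mem_univ, true_and] at ha ⊢
      exact ⟨lt_trans h ha.1, ha.2⟩
    · intro hsup
      have := hsup (by simp [h, hr] : r ∈ Finset.univ.filter
        (fun a => i < a ∧ ¬(β a : Prop)))
      simp at this
  · -- β r = true
    simp only [pipeNo, hi, hr, dif_pos, dif_neg, Bool.false_eq_true, not_false_iff]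
    rw [Fin.lt_def]
    simp only []
    have hlt : (Finset.univ.filter (fun a => a < r ∧ β a)).card <
        (Finset.univ.filter (fun a : Fin m => (β a : Prop))).card := by
      apply Finset.card_lt_card
      constructor
      · intro a ha
        simp only [Finset.mem_filter, Finset.mem_univ, true_and] at ha ⊢
        exact ha.2
      · intro hsup
        have := hsup (by simp [hr] : r ∈ Finset.univ.filter (fun a : Fin m => (β a : Prop)))
        simp at this
    calc (Finset.univ.filter (fun a => a < r ∧ β a)).card
        < (Finset.univ.filter (fun a : Fin m => (β a : Prop))).card := hlt
      _ ≤ _ := Nat.le_add_right _ _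

theorem pipeNo_injective (β : Fin m → Bool) : Function.Injective (pipeNo β) := by
  intro i r hir
  by_contra hne
  rcases lt_trichotomy i r with h | h | h
  · rcases hi : β i with _ | _
    · exact absurd hir (ne_of_gt (pipeNo_lt_of_bot h hi))
    · exact absurd hir (ne_of_lt (pipeNo_lt_of_top h hi))
  · exact hne h
  · rcases hi : β r with _ | _
    · exact absurd hir (ne_of_lt (pipeNo_lt_of_bot h hi))
    · exact absurd hir (ne_of_gt (pipeNo_lt_of_top h hi))

/-- The exit column of the pipe entering in row `i`. -/
def cEx (β : Fin m → Bool) (π : Fin m ↪ Fin n) (i : Fin m) : Fin n := π (pipeNo β i)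

theorem cEx_injective (β : Fin m → Bool) (π : Fin m ↪ Fin n) :
    Function.Injective (cEx β π) :=
  fun _ _ h => pipeNo_injective β (π.injective h)

section Dec

variable (hdec : ∀ i i' : Fin m, i < i' → π i' < π i)

include hdec

theorem cEx_lt_of_top {i r : Fin m} (h : i < r) (hi : β i = true) :
    cEx β π r < cEx β π i :=
  hdec _ _ (pipeNo_lt_of_top h hi)

theorem cEx_lt_of_bot {i r : Fin m} (h : i < r) (hi : β i = false) :
    cEx β π i < cEx β π r :=
  hdec _ _ (pipeNo_lt_of_bot h hi)

end Dec

/-- Whether the pipe of some lower row passes through column `j` at row `i` (in the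
canonical pipe dream). -/
def passesC (β : Fin m → Bool) (π : Fin m ↪ Fin n) (i : Fin m) (j : ℕ) : Prop :=
  ∃ r : Fin m, i < r ∧ ((cEx β π r : ℕ) = j)

open Classical in
/-- The canonical pipe dream for a decreasing `π`. -/
noncomputable def canonPD (β : Fin m → Bool) (π : Fin m ↪ Fin n) :
    Fin m → Fin n → Tile := fun i j =>
  if (j : ℕ) = (cEx β π i : ℕ) then (if β i then .wn else .en)
  else if passesC β π i j then .wesn
  else if (if β i then (j : ℕ) < (cEx β π i : ℕ) else (cEx β π i : ℕ) < (j : ℕ)) then .we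
  else .blank

open Classical in
theorem canon_eq_top {i : Fin m} (hβ : β i = true) (j : Fin n) :
    canonPD β π i j =
      if (j : ℕ) = (cEx β π i : ℕ) then .wn
      else if passesC β π i j then .wesn
      else if (j : ℕ) < (cEx β π i : ℕ) then .we
      else .blank := by
  simp [canonPD, hβ]

open Classical in
theorem canon_eq_bot {i : Fin m} (hβ : β i = false) (j : Fin n) :
    canonPD β π i j =
      if (j : ℕ) = (cEx β π i : ℕ) then .en
      else if passesC β π i j then .wesn
      else if (cEx β π i : ℕ) < (j : ℕ) then .we
      else .blank := by
  simp [canonPD, hβ]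

section Dec2

variable (hdec : ∀ i i' : Fin m, i < i' → π i' < π i)

include hdec

theorem passesC_lt_top {i : Fin m} {j : ℕ} (hβ : β i = true) (h : passesC β π i j) :
    j < (cEx β π i : ℕ) := by
  obtain ⟨r, hir, hrj⟩ := h
  have := cEx_lt_of_top (β := β) hdec hir hβ
  rw [Fin.lt_def] at this
  omega

theorem passesC_lt_bot {i : Fin m} {j : ℕ} (hβ : β i = false) (h : passesC β π i j) :
    (cEx β π i : ℕ) < j := by
  obtain ⟨r, hir, hrj⟩ := h
  have := cEx_lt_of_bot (β := β) hdec hir hβ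
  rw [Fin.lt_def] at this
  omega

theorem passesC_ne {i : Fin m} {j : ℕ} (h : passesC β π i j) :
    j ≠ (cEx β π i : ℕ) := by
  rcases hβ : β i with _ | _
  · exact (Nat.ne_of_gt (passesC_lt_bot hdec hβ h))
  · exact (Nat.ne_of_lt (passesC_lt_top hdec hβ h))

theorem passesC_succ {i : Fin m} (h : (i : ℕ) + 1 < m) (j : ℕ) :
    passesC β π i j ↔
      ((cEx β π ⟨(i : ℕ) + 1, h⟩ : ℕ) = j ∨ passesC β π ⟨(i : ℕ) + 1, h⟩ j) := by
  constructor
  · rintro ⟨r, hir, hrj⟩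
    rcases eq_or_lt_of_le (show (i : ℕ) + 1 ≤ (r : ℕ) from hir) with he | hlt
    · left; rw [show (⟨(i : ℕ) + 1, h⟩ : Fin m) = r from Fin.ext he]; exact hrj
    · right; exact ⟨r, hlt, hrj⟩
  · rintro (he | ⟨r, hir, hrj⟩)
    · exact ⟨⟨(i : ℕ) + 1, h⟩, by simp [Fin.lt_def], he⟩
    · exact ⟨r, by rw [Fin.lt_def] at hir ⊢; simp at hir; omega, hrj⟩

theorem passesC_last {i : Fin m} (h : (i : ℕ) + 1 = m) (j : ℕ) :
    ¬ passesC β π i j := by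
  rintro ⟨r, hir, -⟩
  rw [Fin.lt_def] at hir
  omega

theorem occW_canon_top {i : Fin m} (hβ : β i = true) (j : Fin n) :
    (canonPD β π i j).occW = decide ((j : ℕ) ≤ (cEx β π i : ℕ)) := by
  rw [canon_eq_top hβ]
  split_ifs with h1 h2 h3 <;> simp only [Tile.occW] <;> symm
  · rw [decide_eq_true_eq]; omega
  · rw [decide_eq_true_eq]; exact le_of_lt (passesC_lt_top hdec hβ h2)
  · rw [decide_eq_true_eq]; exact le_of_lt h3
  · rw [decide_eq_false_iff_not]; omega

theorem occW_canon_bot {i : Fin m} (hβ : β i = false) (j : Fin n) :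
    (canonPD β π i j).occW = decide ((cEx β π i : ℕ) < (j : ℕ)) := by
  rw [canon_eq_bot hβ]
  split_ifs with h1 h2 h3 <;> simp only [Tile.occW] <;> symm
  · rw [decide_eq_false_iff_not]; omega
  · rw [decide_eq_true_eq]; exact passesC_lt_bot hdec hβ h2
  · rw [decide_eq_true_eq]; exact h3
  · rw [decide_eq_false_iff_not]; omega

theorem occE_canon_top {i : Fin m} (hβ : β i = true) (j : Fin n) :
    (canonPD β π i j).occE = decide ((j : ℕ) < (cEx β π i : ℕ)) := by
  rw [canon_eq_top hβ]
  split_ifs with h1 h2 h3 <;> simp only [Tile.occE] <;> symm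
  · rw [decide_eq_false_iff_not]; omega
  · rw [decide_eq_true_eq]; exact passesC_lt_top hdec hβ h2
  · rw [decide_eq_true_eq]; exact h3
  · rw [decide_eq_false_iff_not]; omega

theorem occE_canon_bot {i : Fin m} (hβ : β i = false) (j : Fin n) :
    (canonPD β π i j).occE = decide ((cEx β π i : ℕ) ≤ (j : ℕ)) := by
  rw [canon_eq_bot hβ]
  split_ifs with h1 h2 h3 <;> simp only [Tile.occE] <;> symm
  · rw [decide_eq_true_eq]; omega
  · rw [decide_eq_true_eq]; exact le_of_lt (passesC_lt_bot hdec hβ h2)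
  · rw [decide_eq_true_eq]; exact le_of_lt h3
  · rw [decide_eq_false_iff_not]; omega

open Classical in
theorem occS_canon (i : Fin m) (j : Fin n) :
    (canonPD β π i j).occS = decide (passesC β π i (j : ℕ)) := by
  have key : ∀ h1 : ¬ ((j : ℕ) = (cEx β π i : ℕ)),
      (decide (passesC β π i (j : ℕ))) = (decide (passesC β π i (j : ℕ))) := fun _ => rfl
  rcases hβ : β i with _ | _ <;> [rw [canon_eq_bot hβ]; rw [canon_eq_top hβ]] <;>
      split_ifs with h1 h2 h3 <;> simp only [Tile.occS] <;> symm
  · rw [decide_eq_false_iff_not]; intro hp; exact passesC_ne hdec hp h1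
  · rw [decide_eq_true_eq]; exact h2
  · rw [decide_eq_false_iff_not]; exact h2
  · rw [decide_eq_false_iff_not]; exact h2
  · rw [decide_eq_false_iff_not]; intro hp; exact passesC_ne hdec hp h1
  · rw [decide_eq_true_eq]; exact h2
  · rw [decide_eq_false_iff_not]; exact h2
  · rw [decide_eq_false_iff_not]; exact h2

open Classical in
theorem occN_canon (i : Fin m) (j : Fin n) :
    (canonPD β π i j).occN =
      decide ((j : ℕ) = (cEx β π i : ℕ) ∨ passesC β π i (j : ℕ)) := by
  rcases hβ : β i with _ | _ <;> [rw [canon_eq_bot hβ]; rw [canon_eq_top hβ]] <;>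
      split_ifs with h1 h2 h3 <;> simp only [Tile.occN] <;> symm
  · rw [decide_eq_true_eq]; exact Or.inl h1
  · rw [decide_eq_true_eq]; exact Or.inr h2
  · rw [decide_eq_false_iff_not]; rintro (h | h) <;> [exact h1 h; exact h2 h]
  · rw [decide_eq_false_iff_not]; rintro (h | h) <;> [exact h1 h; exact h2 h]
  · rw [decide_eq_true_eq]; exact Or.inl h1
  · rw [decide_eq_true_eq]; exact Or.inr h2
  · rw [decide_eq_false_iff_not]; rintro (h | h) <;> [exact h1 h; exact h2 h]
  · rw [decide_eq_false_iff_not]; rintro (h | h) <;> [exact h1 h; exact h2 h]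

theorem isHGPD_canon : IsHGPD m n β (canonPD β π) := by
  refine ⟨?_, ?_, ?_, ?_, ?_, ?_⟩
  · intro i j
    rcases hβ : β i with _ | _
    · rw [canon_eq_bot hβ]
      split_ifs <;> simp [allowedIn]
    · rw [canon_eq_top hβ]
      split_ifs <;> simp [allowedIn]
  · intro i j h
    rcases hβ : β i with _ | _
    · rw [occE_canon_bot hdec hβ, occW_canon_bot hdec hβ, decide_eq_decide]
      simp only [Fin.val_mk]
      omega
    · rw [occE_canon_top hdec hβ, occW_canon_top hdec hβ, decide_eq_decide]
      simp only [Fin.val_mk]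
      omega
  · intro i h j
    rw [occS_canon hdec, occN_canon hdec, decide_eq_decide, passesC_succ hdec h]
    constructor <;> rintro (h' | h') <;>
      first
        | (left; omega)
        | (right; assumption)
  · intro i j h
    rw [occS_canon hdec, decide_eq_false_iff_not]
    exact passesC_last hdec h _
  · intro i j h
    rcases hβ : β i with _ | _
    · rw [occW_canon_bot hdec hβ, decide_eq_false_iff_not]
      omega
    · rw [occW_canon_top hdec hβ]
      rw [decide_eq_true_eq]
      omega
  · intro i j h
    rcases hβ : β i with _ | _
    · rw [occE_canon_bot hdec hβ, Bool.not_false, decide_eq_true_eq]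
      have := (cEx β π i).isLt
      omega
    · rw [occE_canon_top hdec hβ, Bool.not_true, decide_eq_false_iff_not]
      have := (cEx β π i).isLt
      omega

end Dec2

section Rows

variable {ι : Type*}

theorem eOutT_mem (t : Tile) (w s : Option ι) :
    eOutT t w s = none ∨ eOutT t w s = w ∨ eOutT t w s = s := by
  cases t <;> simp [eOutT]

theorem nOutT_mem (t : Tile) (w s : Option ι) :
    nOutT t w s = none ∨ nOutT t w s = w ∨ nOutT t w s = s := by
  cases t <;> simp [nOutT]

theorem hTrace_val {t : ℕ → Tile} {bot : ℕ → Option ι} {e p : ι} :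
    ∀ j, hTrace t bot (some e) j = some p → p = e ∨ ∃ j', bot j' = some p := by
  intro j
  induction j with
  | zero => intro h; left; exact (Option.some_inj.mp h).symm
  | succ j ih =>
    intro h
    rw [hTrace] at h
    rcases eOutT_mem (t j) (hTrace t bot (some e) j) (bot j) with h' | h' | h'
    · rw [h'] at h; exact absurd h (by simp)
    · rw [h'] at h; exact ih h
    · rw [h'] at h; exact Or.inr ⟨j, h⟩

theorem topOutT_val {t : ℕ → Tile} {bot : ℕ → Option ι} {e p : ι} {j : ℕ}
    (h : topOutT t bot (some e) j = some p) : p = e ∨ ∃ j', bot j' = some p := by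
  rw [topOutT] at h
  rcases nOutT_mem (t j) (hTrace t bot (some e) j) (bot j) with h' | h' | h'
  · rw [h'] at h; exact absurd h (by simp)
  · rw [h'] at h; exact hTrace_val _ h
  · rw [h'] at h; exact Or.inr ⟨j, h⟩

theorem rowTop_val {rt : Bool} {n : ℕ} {t : ℕ → Tile} {bot : ℕ → Option ι} {e p : ι} {j : ℕ}
    (h : rowTop rt n t bot (some e) j = some p) : p = e ∨ ∃ j', bot j' = some p := by
  rw [rowTop] at h
  rcases rt with _ | _
  · simp only [if_false, Bool.false_eq_true] at h
    rw [topOutB] at h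
    rcases topOutT_val h with h' | ⟨j', h'⟩
    · exact Or.inl h'
    · exact Or.inr ⟨_, h'⟩
  · simp only [if_true] at h
    exact topOutT_val h

/-- Forward computation of a row in canonical shape. -/
theorem forward_row {n : ℕ} {e : ι} {q : ℕ} (hq : q < n) (t : ℕ → Tile)
    (bot : ℕ → Option ι)
    (ht : ∀ j < n, t j =
      (if j = q then .wn else if (bot j).isSome then .wesn else if j < q then .we
       else .blank))
    (hbot : ∀ j < n, (bot j).isSome = true → j < q) :
    ∀ j < n, topOutT t bot (some e) j = if j = q then some e else bot j := by
  have htr : ∀ j < n, hTrace t bot (some e) j = if j ≤ q then some e else none := by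
    intro j
    induction j with
    | zero => intro _; simp [hTrace]
    | succ j ih =>
      intro hjn
      have hjn' : j < n := by omega
      have ihj := ih hjn'
      rw [hTrace, ht j hjn']
      by_cases h1 : j = q
      · subst h1
        rw [if_pos rfl]
        simp only [eOutT]
        rw [if_neg (by omega)]
      · rw [if_neg h1]
        by_cases h2 : (bot j).isSome = true
        · have hlt := hbot j hjn' h2
          rw [if_pos h2]
          simp only [eOutT]
          rw [ihj, if_pos (by omega : j ≤ q), if_pos (by omega : j + 1 ≤ q)]
        · rw [if_neg h2]
          by_cases h3 : j < q
          · rw [if_pos h3]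
            simp only [eOutT]
            rw [ihj, if_pos (by omega : j ≤ q), if_pos (by omega : j + 1 ≤ q)]
          · rw [if_neg h3]
            simp only [eOutT]
            rw [if_neg (by omega : ¬ (j + 1 ≤ q))]
  intro j hjn
  rw [topOutT, ht j hjn]
  by_cases h1 : j = q
  · subst h1
    rw [if_pos rfl]
    simp only [nOutT]
    rw [htr j hjn, if_pos (le_refl _)]
    simp
  · rw [if_neg h1, if_neg h1]
    by_cases h2 : (bot j).isSome = true
    · rw [if_pos h2]
      simp only [nOutT]
    · rw [if_neg h2]
      have hbn : bot j = none := Option.not_isSome_iff_eq_none.mp (by simp [h2])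
      by_cases h3 : j < q
      · rw [if_pos h3]
        simp only [nOutT]
        rw [hbn]
      · rw [if_neg h3]
        simp only [nOutT]
        rw [hbn]

end Rows

section Dec3

variable (hdec : ∀ i i' : Fin m, i < i' → π i' < π i)

include hdec

open Classical in
theorem lineState_canon :
    ∀ r, r ≤ m → ∀ j, j < n → ∀ i : Fin m,
      (lineState m n β (canonPD β π) r j = some i ↔
        (m - r ≤ (i : ℕ) ∧ (cEx β π i : ℕ) = j)) := by
  intro r
  induction r with
  | zero =>
    intro _ j hj i
    simp only [lineState]
    constructor
    · intro h; exact absurd h (by simp)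
    · rintro ⟨hi, -⟩
      have := i.isLt
      omega
  | succ r ih =>
    intro hrm j hj i
    have hr : r < m := by omega
    have ihh := ih (by omega)
    set i₀ : Fin m := ⟨m - 1 - r, by omega⟩ with hi₀
    set bot : ℕ → Option (Fin m) := fun j' => lineState m n β (canonPD β π) r j' with hbot_def
    have hbot_iff : ∀ j' < n, ∀ i' : Fin m,
        (bot j' = some i' ↔ ((i₀ : ℕ) + 1 ≤ (i' : ℕ) ∧ (cEx β π i' : ℕ) = j')) := by
      intro j' hj' i'
      rw [hbot_def]
      simp only []
      rw [ihh j' hj' i']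
      have : m - r = (i₀ : ℕ) + 1 := by simp only [hi₀]; omega
      rw [this]
    have hbot_some : ∀ j' < n, ((bot j').isSome = true ↔ passesC β π i₀ j') := by
      intro j' hj'
      constructor
      · intro hs
        obtain ⟨i', hi'⟩ := Option.isSome_iff_exists.mp hs
        rw [hbot_iff j' hj' i'] at hi'
        exact ⟨i', by rw [Fin.lt_def]; omega, hi'.2⟩
      · rintro ⟨i', hlt, hc⟩
        rw [Option.isSome_iff_exists]
        refine ⟨i', (hbot_iff j' hj' i').mpr ⟨?_, hc⟩⟩
        rw [Fin.lt_def] at hlt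
        omega
    have hls : lineState m n β (canonPD β π) (r + 1) j =
        rowTop (β i₀) n (tilesOf (canonPD β π) i₀) bot (some i₀) j := by
      simp only [lineState]
      rw [dif_pos hr]
    have hm1 : m - (r + 1) = (i₀ : ℕ) := by simp only [hi₀]; omega
    rcases hβ : β i₀ with _ | _
    · -- bottom-type row: mirrored
      have hq : n - 1 - (cEx β π i₀ : ℕ) < n := by
        have := (cEx β π i₀).isLt
        omega
      have hfw := forward_row (e := i₀) hq
        (fun j' => (tilesOf (canonPD β π) i₀ (n - 1 - j')).mirror)
        (fun j' => bot (n - 1 - j')) ?_ ?_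
      rotate_left
      · intro j' hj'
        have hcol : n - 1 - j' < n := by omega
        have hcc := (cEx β π i₀).isLt
        simp only [tilesOf, dif_pos hcol]
        rw [canon_eq_bot hβ]
        by_cases h1 : (n - 1 - j' : ℕ) = (cEx β π i₀ : ℕ)
        · rw [if_pos h1, if_pos (by omega : j' = n - 1 - (cEx β π i₀ : ℕ))]
          rfl
        · rw [if_neg h1, if_neg (by omega : ¬ j' = n - 1 - (cEx β π i₀ : ℕ))]
          by_cases h2 : passesC β π i₀ (n - 1 - j')
          · rw [if_pos h2, if_pos ((hbot_some (n - 1 - j') hcol).mpr h2)]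
            rfl
          · rw [if_neg h2,
              if_neg (fun hs => h2 ((hbot_some (n - 1 - j') hcol).mp hs))]
            by_cases h3 : (cEx β π i₀ : ℕ) < n - 1 - j'
            · rw [if_pos h3, if_pos (by omega : j' < n - 1 - (cEx β π i₀ : ℕ))]
              rfl
            · rw [if_neg h3, if_neg (by omega : ¬ j' < n - 1 - (cEx β π i₀ : ℕ))]
              rfl
      · intro j' hj' hs
        have hcol : n - 1 - j' < n := by omega
        have hp := (hbot_some (n - 1 - j') hcol).mp (by simpa using hs)
        have := passesC_lt_bot hdec hβ hp
        omega
      have hnj : n - 1 - j < n := by omega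
      have hkey := hfw (n - 1 - j) hnj
      rw [hls]
      simp only [rowTop, hβ, Bool.false_eq_true, if_false]
      rw [topOutB]
      rw [hkey]
      have hback : n - 1 - (n - 1 - j) = j := by omega
      rw [hback]
      have hcc := (cEx β π i₀).isLt
      by_cases hc : j = (cEx β π i₀ : ℕ)
      · rw [if_pos (by omega : n - 1 - j = n - 1 - (cEx β π i₀ : ℕ))]
        constructor
        · intro h
          have hii : i = i₀ := (Option.some_inj.mp h).symm
          subst hii
          exact ⟨by omega, hc.symm⟩
        · rintro ⟨hi, hc'⟩
          have : i = i₀ := cEx_injective β π (Fin.ext (by omega))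
          rw [this]
      · rw [if_neg (by omega : ¬ n - 1 - j = n - 1 - (cEx β π i₀ : ℕ))]
        rw [hbot_iff j hj i]
        constructor
        · rintro ⟨h1, h2⟩; exact ⟨by omega, h2⟩
        · rintro ⟨h1, h2⟩
          refine ⟨?_, h2⟩
          rcases Nat.lt_or_ge (i₀ : ℕ) (i : ℕ) with h | h
          · omega
          · exfalso
            have : i = i₀ := Fin.ext (by omega)
            rw [this] at h2
            exact hc h2.symm
    · -- top-type row
      have hfw := forward_row (e := i₀) (cEx β π i₀).isLt
        (tilesOf (canonPD β π) i₀) bot ?_ ?_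
      rotate_left
      · intro j' hj'
        simp only [tilesOf, dif_pos hj']
        rw [canon_eq_top hβ]
        by_cases h1 : j' = (cEx β π i₀ : ℕ)
        · rw [if_pos h1, if_pos h1]
        · rw [if_neg h1, if_neg h1]
          by_cases h2 : passesC β π i₀ j'
          · rw [if_pos h2, if_pos ((hbot_some j' hj').mpr h2)]
          · rw [if_neg h2, if_neg (fun hs => h2 ((hbot_some j' hj').mp hs))]
      · intro j' hj' hs
        have hp := (hbot_some j' hj').mp hs
        exact passesC_lt_top hdec hβ hp
      have hkey := hfw j hj
      rw [hls]
      simp only [rowTop, hβ, if_true]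
      rw [hkey]
      by_cases hc : j = (cEx β π i₀ : ℕ)
      · rw [if_pos hc]
        constructor
        · intro h
          have hii : i = i₀ := (Option.some_inj.mp h).symm
          subst hii
          exact ⟨by omega, hc.symm⟩
        · rintro ⟨hi, hc'⟩
          have : i = i₀ := cEx_injective β π (Fin.ext (by omega))
          rw [this]
      · rw [if_neg hc]
        rw [hbot_iff j hj i]
        constructor
        · rintro ⟨h1, h2⟩; exact ⟨by omega, h2⟩
        · rintro ⟨h1, h2⟩
          refine ⟨?_, h2⟩
          rcases Nat.lt_or_ge (i₀ : ℕ) (i : ℕ) with h | h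
          · omega
          · exfalso
            have : i = i₀ := Fin.ext (by omega)
            rw [this] at h2
            exact hc h2.symm

theorem connectivity_canon : Connectivity m n β (canonPD β π) π := by
  intro i
  have h := (lineState_canon hdec m le_rfl (π (pipeNo β i) : ℕ) (π (pipeNo β i)).isLt i).mpr
    ⟨by omega, rfl⟩
  exact h

end Dec3

section Mirror

theorem Tile.mirror_mirror (t : Tile) : t.mirror.mirror = t := by cases t <;> rfl

theorem occW_mirror (t : Tile) : t.mirror.occW = t.occE := by cases t <;> rfl

theorem occE_mirror (t : Tile) : t.mirror.occE = t.occW := by cases t <;> rfl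

theorem occN_mirror (t : Tile) : t.mirror.occN = t.occN := by cases t <;> rfl

theorem occS_mirror (t : Tile) : t.mirror.occS = t.occS := by cases t <;> rfl

theorem allowedIn_true_iff (t : Tile) :
    allowedIn true t ↔
      (t = .blank ∨ t = .wn ∨ t = .se ∨ t = .wnse ∨ t = .we ∨ t = .sn ∨ t = .wesn) := by
  simp [allowedIn]

theorem allowed_mirror {t : Tile} (h : allowedIn false t) : allowedIn true t.mirror := by
  simp only [allowedIn, Bool.false_eq_true, if_false] at h
  rw [allowedIn_true_iff]
  rcases h with rfl | rfl | rfl | rfl | rfl | rfl | rfl <;> simp [Tile.mirror]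

end Mirror

section RowsTwo

variable {ι : Type*}

/-- Hypotheses on a (possibly mirrored) `⊤`-type row extracted from an HGPD. -/
structure RowHyp (n : ℕ) (t : ℕ → Tile) (bot : ℕ → Option ι) : Prop where
  allowed : ∀ j < n, allowedIn true (t j)
  w0 : (t 0).occW = true
  elast : (t (n - 1)).occE = false
  matchWE : ∀ j, j + 1 < n → (t j).occE = (t (j + 1)).occW
  bots : ∀ j < n, (bot j).isSome = (t j).occS

theorem RowHyp.hTrace_isSome {n : ℕ} {t : ℕ → Tile} {bot : ℕ → Option ι}
    (h : RowHyp n t bot) (e : ι) :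
    ∀ j, j < n → (hTrace t bot (some e) j).isSome = (t j).occW := by
  intro j
  induction j with
  | zero => intro _; simp [hTrace, h.w0]
  | succ j ih =>
    intro hjn
    have hw := ih (by omega)
    have hs := h.bots j (by omega)
    have hm := h.matchWE j hjn
    rw [hTrace, ← hm]
    have ha := h.allowed j (by omega)
    rw [allowedIn_true_iff] at ha
    rcases ha with ht | ht | ht | ht | ht | ht | ht <;> rw [ht] at hs hw ⊢ <;>
      simp only [eOutT, Tile.occE, Tile.occS, Tile.occW] at hs hw ⊢ <;>
      first
        | rfl
        | exact hs
        | exact hw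

theorem RowHyp.topOutT_isSome {n : ℕ} {t : ℕ → Tile} {bot : ℕ → Option ι}
    (h : RowHyp n t bot) (e : ι) :
    ∀ j, j < n → (topOutT t bot (some e) j).isSome = (t j).occN := by
  intro j hjn
  have hw := h.hTrace_isSome e j hjn
  have hs := h.bots j hjn
  rw [topOutT]
  have ha := h.allowed j hjn
  rw [allowedIn_true_iff] at ha
  rcases ha with ht | ht | ht | ht | ht | ht | ht <;> rw [ht] at hs hw ⊢ <;>
    simp only [nOutT, Tile.occN, Tile.occS, Tile.occW] at hs hw ⊢ <;>
    first
      | rfl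
      | exact hs
      | exact hw

end RowsTwo

section HGPDf

variable {f : Fin m → Fin n → Tile}

/-- The row hypotheses for a `⊤`-type row of an HGPD. -/
theorem rowHyp_top (hf : IsHGPD m n β f) (hn : 0 < n) {i₀ : Fin m} (hβ : β i₀ = true)
    {bot : ℕ → Option (Fin m)}
    (hbots : ∀ j < n, (bot j).isSome = (tilesOf f i₀ j).occS) :
    RowHyp n (tilesOf f i₀) bot := by
  refine ⟨?_, ?_, ?_, ?_, hbots⟩
  · intro j hj
    simp only [tilesOf, dif_pos hj]
    have := hf.1 i₀ ⟨j, hj⟩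
    rwa [hβ] at this
  · simp only [tilesOf, dif_pos hn]
    have := hf.2.2.2.2.1 i₀ ⟨0, hn⟩ rfl
    rwa [hβ] at this
  · have hn1 : n - 1 < n := by omega
    simp only [tilesOf, dif_pos hn1]
    have := hf.2.2.2.2.2 i₀ ⟨n - 1, hn1⟩ (by simp; omega)
    rwa [hβ] at this
  · intro j hj
    have hj' : j < n := by omega
    simp only [tilesOf, dif_pos hj', dif_pos hj]
    exact hf.2.1 i₀ ⟨j, hj'⟩ (by simpa using hj)

/-- The row hypotheses for (the mirror image of) a `⊥`-type row of an HGPD. -/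
theorem rowHyp_bot (hf : IsHGPD m n β f) (hn : 0 < n) {i₀ : Fin m} (hβ : β i₀ = false)
    {bot : ℕ → Option (Fin m)}
    (hbots : ∀ j < n, (bot j).isSome = (tilesOf f i₀ j).occS) :
    RowHyp n (fun j => (tilesOf f i₀ (n - 1 - j)).mirror) (fun j => bot (n - 1 - j)) := by
  have hcol : ∀ j : ℕ, j < n → n - 1 - j < n := fun j hj => by omega
  refine ⟨?_, ?_, ?_, ?_, ?_⟩
  · intro j hj
    apply allowed_mirror
    simp only [tilesOf, dif_pos (hcol j hj)]
    have := hf.1 i₀ ⟨n - 1 - j, hcol j hj⟩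
    rwa [hβ] at this
  · rw [occW_mirror]
    simp only [Nat.sub_zero, tilesOf, dif_pos (by omega : n - 1 < n)]
    have := hf.2.2.2.2.2 i₀ ⟨n - 1, by omega⟩ (by simp; omega)
    rwa [hβ] at this
  · rw [occE_mirror]
    have : n - 1 - (n - 1) = 0 := by omega
    rw [this]
    simp only [tilesOf, dif_pos hn]
    have := hf.2.2.2.2.1 i₀ ⟨0, hn⟩ rfl
    rwa [hβ] at this
  · intro j hj
    rw [occE_mirror, occW_mirror]
    have h1 : n - 1 - j < n := by omega
    have h2 : n - 1 - (j + 1) < n := by omega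
    simp only [tilesOf, dif_pos h1, dif_pos h2]
    have heq : (n - 1 - (j + 1)) + 1 = n - 1 - j := by omega
    have hstep := hf.2.1 i₀ ⟨n - 1 - (j + 1), h2⟩ (by simpa [heq] using h1)
    have h4 : (⟨((⟨n - 1 - (j + 1), h2⟩ : Fin n) : ℕ) + 1, by simpa [heq] using h1⟩ : Fin n)
        = ⟨n - 1 - j, h1⟩ := Fin.ext (by simpa using heq)
    exact (hstep.trans (congrArg (fun x => (f i₀ x).occW) h4)).symm
  · intro j hj
    rw [occS_mirror]
    exact hbots _ (hcol j hj)

/-- Someness of `lineState` matches the occupancy of the corresponding horizontal edges. -/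
theorem lineState_isSome (hf : IsHGPD m n β f) (hm : 1 ≤ m) (hn : 0 < n) :
    ∀ r ≤ m, ∀ j, (hj : j < n) →
      (lineState m n β f r j).isSome =
        (if h : r < m then (f ⟨m - 1 - r, by omega⟩ ⟨j, hj⟩).occS
         else (f ⟨0, by omega⟩ ⟨j, hj⟩).occN) := by
  intro r
  induction r with
  | zero =>
    intro _ j hj
    rw [dif_pos (by omega : 0 < m)]
    simp only [lineState, Option.isSome_none]
    exact (hf.2.2.2.1 ⟨m - 1 - 0, by omega⟩ ⟨j, hj⟩ (by simp; omega)).symm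
  | succ r ih =>
    intro hrm j hj
    have hr : r < m := by omega
    set i₀ : Fin m := ⟨m - 1 - r, by omega⟩ with hi₀
    set bot : ℕ → Option (Fin m) := fun j' => lineState m n β f r j' with hbot_def
    have hbots : ∀ j' < n, (bot j').isSome = (tilesOf f i₀ j').occS := by
      intro j' hj'
      rw [hbot_def]
      simp only []
      rw [ih (by omega) j' hj', dif_pos hr]
      simp only [tilesOf, dif_pos hj']
      rfl
    have hls : lineState m n β f (r + 1) j =
        rowTop (β i₀) n (tilesOf f i₀) bot (some i₀) j := by
      simp only [lineState]
      rw [dif_pos hr]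
    have hocc : (lineState m n β f (r + 1) j).isSome = (f i₀ ⟨j, hj⟩).occN := by
      rw [hls]
      rcases hβ : β i₀ with _ | _
      · simp only [rowTop, hβ, Bool.false_eq_true, if_false]
        rw [topOutB]
        have hrh := rowHyp_bot hf hn hβ hbots
        have := hrh.topOutT_isSome i₀ (n - 1 - j) (by omega)
        rw [this, occN_mirror]
        have hback : n - 1 - (n - 1 - j) = j := by omega
        rw [hback]
        simp only [tilesOf, dif_pos hj]
      · simp only [rowTop, hβ, if_true]
        have hrh := rowHyp_top hf hn hβ hbots
        have := hrh.topOutT_isSome i₀ j hj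
        rw [this]
        simp only [tilesOf, dif_pos hj]
    rw [hocc]
    by_cases hlt : r + 1 < m
    · rw [dif_pos hlt]
      have hstep := hf.2.2.1 ⟨m - 1 - (r + 1), by omega⟩ (by simp; omega) ⟨j, hj⟩
      have : (⟨(m - 1 - (r + 1) : ℕ) + 1, by omega⟩ : Fin m) = i₀ := Fin.ext (by simp [hi₀]; omega)
      rw [this] at hstep
      exact hstep.symm
    · rw [dif_neg hlt]
      have : i₀ = ⟨0, by omega⟩ := Fin.ext (by simp [hi₀]; omega)
      rw [this]

/-- On each horizontal line the number of pipes crossing it equals the number of rows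
below it. -/
theorem lineState_isSome_occN (hf : IsHGPD m n β f) (hm : 1 ≤ m) (hn : 0 < n) :
    ∀ r < m, ∀ j, (hj : j < n) →
      (lineState m n β f (r + 1) j).isSome = (f ⟨m - 1 - r, by omega⟩ ⟨j, hj⟩).occN := by
  intro r hr j hj
  by_cases hlt : r + 1 < m
  · rw [lineState_isSome hf hm hn (r + 1) (by omega) j hj, dif_pos hlt]
    have hstep := hf.2.2.1 ⟨m - 1 - (r + 1), by omega⟩ (by simp; omega) ⟨j, hj⟩
    have h4 : (⟨(m - 1 - (r + 1) : ℕ) + 1, by omega⟩ : Fin m) = ⟨m - 1 - r, by omega⟩ :=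
      Fin.ext (by simp; omega)
    rw [h4] at hstep
    exact hstep
  · rw [lineState_isSome hf hm hn (r + 1) (by omega) j hj, dif_neg hlt]
    have h4 : (⟨0, by omega⟩ : Fin m) = ⟨m - 1 - r, by omega⟩ := Fin.ext (by simp; omega)
    rw [h4]

theorem row_sum_occ (hf : IsHGPD m n β f) (hn : 0 < n) (i₀ : Fin m) :
    ∑ j ∈ Finset.range n, (tilesOf f i₀ j).occN.toNat =
      (∑ j ∈ Finset.range n, (tilesOf f i₀ j).occS.toNat) + 1 := by
  set t : ℕ → Tile := tilesOf f i₀ with ht_def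
  have hb1 : (t 0).occW = β i₀ := by
    rw [ht_def]
    simp only [tilesOf, dif_pos hn]
    exact hf.2.2.2.2.1 i₀ ⟨0, hn⟩ rfl
  have hb2 : (t (n - 1)).occE = !(β i₀) := by
    rw [ht_def]
    simp only [tilesOf, dif_pos (by omega : n - 1 < n)]
    exact hf.2.2.2.2.2 i₀ ⟨n - 1, by omega⟩ (by simp; omega)
  have e1 : ∑ j ∈ Finset.range n, (t j).occW.toNat =
      (∑ j ∈ Finset.range (n - 1), (t (j + 1)).occW.toNat) + (t 0).occW.toNat := by
    rw [← Finset.sum_range_succ' (fun j => (t j).occW.toNat) (n - 1)]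
    congr 2
    omega
  have e3 : ∑ j ∈ Finset.range (n - 1), (t (j + 1)).occW.toNat =
      ∑ j ∈ Finset.range (n - 1), (t j).occE.toNat := by
    apply Finset.sum_congr rfl
    intro j hj
    rw [Finset.mem_range] at hj
    have := hf.2.1 i₀ ⟨j, by omega⟩ (by simpa using (by omega : j + 1 < n))
    rw [ht_def]
    simp only [tilesOf, dif_pos (by omega : j + 1 < n), dif_pos (by omega : j < n)]
    rw [this]
  have hshift : ∑ j ∈ Finset.range n, (t j).occW.toNat =
      (t 0).occW.toNat + ∑ j ∈ Finset.range (n - 1), (t j).occE.toNat := by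
    rw [e1, e3]
    omega
  have hEsplit : ∑ j ∈ Finset.range n, (t j).occE.toNat =
      (∑ j ∈ Finset.range (n - 1), (t j).occE.toNat) + (t (n - 1)).occE.toNat := by
    rw [← Finset.sum_range_succ (fun j => (t j).occE.toNat) (n - 1)]
    congr 2
    omega
  rcases hβ : β i₀ with _ | _
  · -- ⊥ row: occN + occW = occS + occE tile-wise
    have htile : ∀ j < n, (t j).occN.toNat + (t j).occW.toNat =
        (t j).occS.toNat + (t j).occE.toNat := by
      intro j hj
      have ha := hf.1 i₀ ⟨j, hj⟩
      rw [hβ] at ha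
      simp only [allowedIn, Bool.false_eq_true, if_false] at ha
      rw [ht_def]
      simp only [tilesOf, dif_pos hj]
      rcases ha with h | h | h | h | h | h | h <;> rw [h] <;> rfl
    have hsum : (∑ j ∈ Finset.range n, (t j).occN.toNat) +
        (∑ j ∈ Finset.range n, (t j).occW.toNat) =
        (∑ j ∈ Finset.range n, (t j).occS.toNat) +
        (∑ j ∈ Finset.range n, (t j).occE.toNat) := by
      rw [← Finset.sum_add_distrib, ← Finset.sum_add_distrib]
      apply Finset.sum_congr rfl
      intro j hj
      exact htile j (Finset.mem_range.mp hj)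
    have hw0 : (t 0).occW.toNat = 0 := by rw [hb1, hβ]; rfl
    have hel : (t (n - 1)).occE.toNat = 1 := by rw [hb2, hβ]; rfl
    omega
  · -- ⊤ row: occN + occE = occS + occW tile-wise
    have htile : ∀ j < n, (t j).occN.toNat + (t j).occE.toNat =
        (t j).occS.toNat + (t j).occW.toNat := by
      intro j hj
      have ha := hf.1 i₀ ⟨j, hj⟩
      rw [hβ, allowedIn_true_iff] at ha
      rw [ht_def]
      simp only [tilesOf, dif_pos hj]
      rcases ha with h | h | h | h | h | h | h <;> rw [h] <;> rfl
    have hsum : (∑ j ∈ Finset.range n, (t j).occN.toNat) +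
        (∑ j ∈ Finset.range n, (t j).occE.toNat) =
        (∑ j ∈ Finset.range n, (t j).occS.toNat) +
        (∑ j ∈ Finset.range n, (t j).occW.toNat) := by
      rw [← Finset.sum_add_distrib, ← Finset.sum_add_distrib]
      apply Finset.sum_congr rfl
      intro j hj
      exact htile j (Finset.mem_range.mp hj)
    have hw0 : (t 0).occW.toNat = 1 := by rw [hb1, hβ]; rfl
    have hel : (t (n - 1)).occE.toNat = 0 := by rw [hb2, hβ]; rfl
    omega

theorem lineState_count (hf : IsHGPD m n β f) (hm : 1 ≤ m) (hn : 0 < n) :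
    ∀ r ≤ m, ∑ j ∈ Finset.range n, (lineState m n β f r j).isSome.toNat = r := by
  intro r
  induction r with
  | zero => intro _; simp [lineState]
  | succ r ih =>
    intro hrm
    have hr : r < m := by omega
    calc ∑ j ∈ Finset.range n, (lineState m n β f (r + 1) j).isSome.toNat
        = ∑ j ∈ Finset.range n, (tilesOf f ⟨m - 1 - r, by omega⟩ j).occN.toNat := by
          apply Finset.sum_congr rfl
          intro j hj
          rw [Finset.mem_range] at hj
          rw [lineState_isSome_occN hf hm hn r hr j hj]
          simp only [tilesOf, dif_pos hj]
      _ = (∑ j ∈ Finset.range n, (tilesOf f ⟨m - 1 - r, by omega⟩ j).occS.toNat) + 1 :=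
          row_sum_occ hf hn _
      _ = (∑ j ∈ Finset.range n, (lineState m n β f r j).isSome.toNat) + 1 := by
          congr 1
          apply Finset.sum_congr rfl
          intro j hj
          rw [Finset.mem_range] at hj
          rw [lineState_isSome hf hm hn r (by omega) j hj, dif_pos hr]
          simp only [tilesOf, dif_pos hj]
      _ = r + 1 := by rw [ih (by omega)]

end HGPDf

section RowUnique

variable {ι : Type*}

/-- Uniqueness of a row given its top pattern: if the entering pipe exits at the
rightmost occupied column of the top boundary, the row has canonical shape. -/
theorem row_unique {n : ℕ} {t : ℕ → Tile} {bot : ℕ → Option ι} {e : ι} {q : ℕ}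
    (hrh : RowHyp n t bot) (hq : q < n) (T : ℕ → Option ι)
    (htop : ∀ j < n, topOutT t bot (some e) j = T j)
    (hTq : T q = some e)
    (hTnone : ∀ j < n, q < j → T j = none)
    (hbote : ∀ j < n, bot j ≠ some e) :
    (∀ j < n, t j = (if j = q then .wn else if (T j).isSome then .wesn
      else if j < q then .we else .blank)) ∧
    (∀ j < n, bot j = if j < q then T j else none) := by
  have htrS : ∀ j < n, (hTrace t bot (some e) j).isSome = (t j).occW :=
    hrh.hTrace_isSome e
  -- any tile strictly right of q with free East edge is blank
  have hforce : ∀ j < n, q < j → (t j).occE = false → t j = .blank := by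
    intro j hj hqj hE
    have ha := hrh.allowed j hj
    rw [allowedIn_true_iff] at ha
    have hT := (htop j hj).trans (hTnone j hj hqj)
    rw [topOutT] at hT
    rcases ha with h | h | h | h | h | h | h
    · exact h
    · -- wn
      exfalso
      rw [h] at hT
      simp only [nOutT] at hT
      have hts := htrS j hj
      rw [hT, h] at hts
      simp [Tile.occW] at hts
    · exfalso; rw [h] at hE; simp [Tile.occE] at hE
    · exfalso; rw [h] at hE; simp [Tile.occE] at hE
    · exfalso; rw [h] at hE; simp [Tile.occE] at hE
    · -- sn
      exfalso
      rw [h] at hT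
      simp only [nOutT] at hT
      have hbs := hrh.bots j hj
      rw [hT, h] at hbs
      simp [Tile.occS] at hbs
    · exfalso; rw [h] at hE; simp [Tile.occE] at hE
  -- the East edges from column q on are all free, and tiles right of q are blank
  have hEfree : ∀ d, d ≤ n - 1 - q → (t (n - 1 - d)).occE = false := by
    intro d
    induction d with
    | zero => intro _; exact hrh.elast
    | succ d ihd =>
      intro hd
      have hprev := ihd (by omega)
      have hblank : t (n - 1 - d) = .blank :=
        hforce _ (by omega) (by omega) hprev
      have hmw := hrh.matchWE (n - 1 - (d + 1)) (by omega)
      have heq : n - 1 - (d + 1) + 1 = n - 1 - d := by omega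
      rw [heq] at hmw
      rw [hmw, hblank]
      rfl
  have hblank : ∀ j < n, q < j → t j = .blank := by
    intro j hj hqj
    have hd : n - 1 - (n - 1 - j) = j := by omega
    have := hEfree (n - 1 - j) (by omega)
    rw [hd] at this
    exact hforce j hj hqj this
  -- the tile at q is wn and the trace reaches q
  have hEq : (t q).occE = false := by
    by_cases hq1 : q = n - 1
    · rw [hq1]; exact hrh.elast
    · have hmw := hrh.matchWE q (by omega)
      rw [hmw, hblank (q + 1) (by omega) (by omega)]
      rfl
  have htq : t q = .wn ∧ hTrace t bot (some e) q = some e := by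
    have ha := hrh.allowed q hq
    rw [allowedIn_true_iff] at ha
    have hT := (htop q hq).trans hTq
    rw [topOutT] at hT
    rcases ha with h | h | h | h | h | h | h
    · rw [h] at hT; simp only [nOutT] at hT; exact absurd hT (by simp)
    · rw [h] at hT; simp only [nOutT] at hT; exact ⟨h, hT⟩
    · exfalso; rw [h] at hEq; simp [Tile.occE] at hEq
    · exfalso; rw [h] at hEq; simp [Tile.occE] at hEq
    · exfalso; rw [h] at hEq; simp [Tile.occE] at hEq
    · rw [h] at hT; simp only [nOutT] at hT; exact absurd hT (hbote q hq)
    · exfalso; rw [h] at hEq; simp [Tile.occE] at hEq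
  -- tracing back from q: tiles left of q are we or wesn
  have htr_left : ∀ d, d ≤ q → hTrace t bot (some e) (q - d) = some e ∧
      (0 < d → (t (q - d) = .we ∨ t (q - d) = .wesn)) := by
    intro d
    induction d with
    | zero => intro _; exact ⟨by simpa using htq.2, by omega⟩
    | succ d ihd =>
      intro hd
      have ihh := ihd (by omega)
      have heq : q - d = (q - (d + 1)) + 1 := by omega
      have htr := ihh.1
      rw [heq, hTrace] at htr
      set j := q - (d + 1) with hj_def
      have hjn : j < n := by omega
      have ha := hrh.allowed j hjn
      rw [allowedIn_true_iff] at ha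
      rcases ha with h | h | h | h | h | h | h <;> rw [h] at htr <;>
          simp only [eOutT] at htr
      · exact absurd htr (by simp)
      · exact absurd htr (by simp)
      · exact absurd htr (hbote j hjn)
      · exact absurd htr (hbote j hjn)
      · exact ⟨htr, fun _ => Or.inl h⟩
      · exact absurd htr (by simp)
      · exact ⟨htr, fun _ => Or.inr h⟩
  constructor
  · intro j hj
    rcases lt_trichotomy j q with hlt | heq | hgt
    · have hwe := (htr_left (q - j) (by omega)).2 (by omega)
      have hqj : q - (q - j) = j := by omega
      rw [hqj] at hwe
      rcases hwe with h | h
      · -- tile we: T j = none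
        have hT := (htop j hj).symm
        rw [topOutT, h] at hT
        simp only [nOutT] at hT
        rw [if_neg (by omega : ¬ j = q), if_neg (by simp [hT]), if_pos hlt]
        exact h
      · -- tile wesn: T j = bot j which is some
        have hT := (htop j hj).symm
        rw [topOutT, h] at hT
        simp only [nOutT] at hT
        have hbs := hrh.bots j hj
        rw [h] at hbs
        simp only [Tile.occS] at hbs
        rw [if_neg (by omega : ¬ j = q),
          if_pos (by rw [hT, hbs] : (T j).isSome = true)]
        exact h
    · rw [if_pos heq]
      rw [heq]
      exact htq.1
    · have hb := hblank j hj hgt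
      have hTn := hTnone j hj hgt
      rw [if_neg (by omega : ¬ j = q), if_neg (by simp [hTn]), if_neg (by omega)]
      exact hb
  · intro j hj
    rcases lt_trichotomy j q with hlt | heq | hgt
    · rw [if_pos hlt]
      have hwe := (htr_left (q - j) (by omega)).2 (by omega)
      have hqj : q - (q - j) = j := by omega
      rw [hqj] at hwe
      have hT := (htop j hj).symm
      rw [topOutT] at hT
      have hbs := hrh.bots j hj
      rcases hwe with h | h <;> rw [h] at hT hbs <;> simp only [nOutT] at hT <;>
          simp only [Tile.occS] at hbs
      · rw [hT]
        exact Option.not_isSome_iff_eq_none.mp (by simp [hbs])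
      · rw [hT]
    · rw [if_neg (by omega)]
      have hbs := hrh.bots j hj
      rw [heq, htq.1] at hbs
      simp only [Tile.occS] at hbs
      rw [heq]
      exact Option.not_isSome_iff_eq_none.mp (by simp [hbs])
    · rw [if_neg (by omega)]
      have hbs := hrh.bots j hj
      rw [hblank j hj hgt] at hbs
      simp only [Tile.occS] at hbs
      exact Option.not_isSome_iff_eq_none.mp (by simp [hbs])

end RowUnique

section Unique

variable {f : Fin m → Fin n → Tile}

theorem lineState_val :
    ∀ r ≤ m, ∀ j (p : Fin m), lineState m n β f r j = some p → m - r ≤ (p : ℕ) := by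
  intro r
  induction r with
  | zero => intro _ j p h; exact absurd h (by simp [lineState])
  | succ r ih =>
    intro hrm j p h
    have hr : r < m := by omega
    rw [show lineState m n β f (r + 1) j =
        rowTop (β ⟨m - 1 - r, by omega⟩) n (tilesOf f ⟨m - 1 - r, by omega⟩)
          (fun j' => lineState m n β f r j') (some ⟨m - 1 - r, by omega⟩) j by
      simp only [lineState]; rw [dif_pos hr]] at h
    rcases rowTop_val h with h' | ⟨j', h'⟩
    · rw [h']; simp; omega
    · have := ih (by omega) j' p h'
      omega

section DecU

variable (hdec : ∀ i i' : Fin m, i < i' → π i' < π i)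
  (hf : IsHGPD m n β f) (hc : Connectivity m n β f π)
  (hm : 1 ≤ m) (hn : 0 < n)

include hdec hf hc hm hn

theorem top_pattern :
    ∀ j < n, ∀ i : Fin m, (lineState m n β f m j = some i ↔ (cEx β π i : ℕ) = j) := by
  have hmpr : ∀ i : Fin m, lineState m n β f m (cEx β π i : ℕ) = some i := fun i => hc i
  intro j hj i
  constructor
  · intro h
    -- count the occupied columns on the North boundary
    set S : Finset ℕ := (Finset.range n).filter
      (fun j' => (lineState m n β f m j').isSome) with hS_def
    have hcardS : S.card = m := by
      have h1 : S.card = ∑ j' ∈ Finset.range n, (lineState m n β f m j').isSome.toNat := by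
        rw [hS_def, Finset.card_filter]
        apply Finset.sum_congr rfl
        intro j' _
        rcases hb : (lineState m n β f m j').isSome with _ | _ <;> simp [hb]
      rw [h1, lineState_count hf hm hn m le_rfl]
    set T : Finset ℕ := Finset.image (fun i' : Fin m => (cEx β π i' : ℕ)) Finset.univ
      with hT_def
    have hTS : T ⊆ S := by
      intro a ha
      rw [hT_def, Finset.mem_image] at ha
      obtain ⟨i', -, rfl⟩ := ha
      rw [hS_def, Finset.mem_filter]
      exact ⟨Finset.mem_range.mpr (cEx β π i').isLt, by rw [hmpr i']; rfl⟩
    have hcardT : T.card = m := by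
      rw [hT_def, Finset.card_image_of_injective _
        (fun a b hab => cEx_injective β π (Fin.ext hab))]
      simp
    have hST : T = S := Finset.eq_of_subset_of_card_le hTS (by omega)
    have hjS : j ∈ S := by
      rw [hS_def, Finset.mem_filter]
      exact ⟨Finset.mem_range.mpr hj, by rw [h]; rfl⟩
    rw [← hST, hT_def, Finset.mem_image] at hjS
    obtain ⟨i', -, hi'⟩ := hjS
    have := hmpr i'
    rw [hi', h] at this
    have hii : i = i' := Option.some_inj.mp this
    rw [hii]
    exact hi'
  · intro h
    rw [← h]
    exact hmpr i

theorem hgpd_unique : f = canonPD β π := by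
  have key : ∀ k, k ≤ m →
      (∀ j < n, ∀ i : Fin m, (lineState m n β f (m - k) j = some i ↔
        (k ≤ (i : ℕ) ∧ (cEx β π i : ℕ) = j))) ∧
      (∀ i : Fin m, (i : ℕ) < k → ∀ j : Fin n, f i j = canonPD β π i j) := by
    intro k
    induction k with
    | zero =>
      intro _
      refine ⟨?_, fun i hi => absurd hi (by omega)⟩
      intro j hj i
      rw [Nat.sub_zero, top_pattern hdec hf hc hm hn j hj i]
      constructor
      · intro h; exact ⟨Nat.zero_le _, h⟩
      · intro h; exact h.2
    | succ k ihk =>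
      intro hkm
      have hk : k < m := by omega
      obtain ⟨ihT, ihrows⟩ := ihk (by omega)
      set i₀ : Fin m := ⟨k, hk⟩ with hi₀
      have hi₀v : (i₀ : ℕ) = k := rfl
      set bot : ℕ → Option (Fin m) := fun j' => lineState m n β f (m - k - 1) j'
        with hbot_def
      set T : ℕ → Option (Fin m) := fun j' => lineState m n β f (m - k) j' with hT_def
      have hrow : ∀ j, T j = rowTop (β i₀) n (tilesOf f i₀) bot (some i₀) j := by
        intro j
        rw [hT_def]
        simp only []
        rw [show m - k = (m - k - 1) + 1 by omega]
        simp only [lineState]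
        rw [dif_pos (by omega : m - k - 1 < m)]
        have hfi : (⟨m - 1 - (m - k - 1), by omega⟩ : Fin m) = i₀ :=
          Fin.ext (show m - 1 - (m - k - 1) = (i₀ : ℕ) by omega)
        rw [hfi]
      have hbots : ∀ j < n, (bot j).isSome = (tilesOf f i₀ j).occS := by
        intro j hj
        rw [hbot_def]
        simp only []
        rw [lineState_isSome hf hm hn (m - k - 1) (by omega) j hj,
          dif_pos (by omega : m - k - 1 < m)]
        simp only [tilesOf, dif_pos hj]
        have hfi2 : (⟨m - 1 - (m - k - 1), by omega⟩ : Fin m) = i₀ :=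
          Fin.ext (show m - 1 - (m - k - 1) = (i₀ : ℕ) by omega)
        rw [hfi2]
      have hbote : ∀ j < n, bot j ≠ some i₀ := by
        intro j hj hcon
        have := lineState_val (m - k - 1) (by omega) j i₀ hcon
        omega
      have hbotval : ∀ j (p : Fin m), bot j = some p → (i₀ : ℕ) + 1 ≤ (p : ℕ) := by
        intro j p h
        have := lineState_val (m - k - 1) (by omega) j p h
        omega
      rcases hβ : β i₀ with _ | _
      · -- bottom-type row, mirrored
        set q : ℕ := n - 1 - (cEx β π i₀ : ℕ) with hq_def
        have hcn := (cEx β π i₀).isLt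
        have hqn : q < n := by omega
        set t' : ℕ → Tile := fun j => (tilesOf f i₀ (n - 1 - j)).mirror with ht'_def
        set bot' : ℕ → Option (Fin m) := fun j => bot (n - 1 - j) with hbot'_def
        set T' : ℕ → Option (Fin m) := fun j => T (n - 1 - j) with hT'_def
        have hrh := rowHyp_bot hf hn hβ hbots
        have htop' : ∀ j < n, topOutT t' bot' (some i₀) j = T' j := by
          intro j hj
          rw [hT'_def]
          simp only []
          rw [hrow (n - 1 - j)]
          simp only [rowTop, hβ, Bool.false_eq_true, if_false]
          rw [topOutB]
          have : n - 1 - (n - 1 - j) = j := by omega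
          rw [this]
        have hTq' : T' q = some i₀ := by
          rw [hT'_def]
          simp only []
          rw [show n - 1 - q = (cEx β π i₀ : ℕ) by omega]
          exact (ihT _ hcn i₀).mpr ⟨le_refl _, rfl⟩
        have hTnone' : ∀ j < n, q < j → T' j = none := by
          intro j hj hqj
          rw [hT'_def]
          simp only []
          rcases hopt : T (n - 1 - j) with _ | i
          · rfl
          · exfalso
            have hmem := (ihT (n - 1 - j) (by omega) i).mp hopt
            rcases Nat.eq_or_lt_of_le hmem.1 with he | hlt
            · have hii : i = i₀ := Fin.ext (by omega)
              rw [hii] at hopt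
              have h2 := ((ihT (n - 1 - j) (by omega) i₀).mp hopt).2
              omega
            · have hlt3 : cEx β π i₀ < cEx β π i :=
                cEx_lt_of_bot hdec (by rw [Fin.lt_def]; omega) hβ
              rw [Fin.lt_def] at hlt3
              omega
        have hbote' : ∀ j < n, bot' j ≠ some i₀ := fun j hj =>
          hbote (n - 1 - j) (by omega)
        obtain ⟨hti, hbo⟩ := row_unique hrh hqn T' htop' hTq' hTnone' hbote'
        refine ⟨?_, ?_⟩
        · -- the new line pattern
          intro j hj i
          have hbo2 := hbo (n - 1 - j) (by omega)
          rw [show n - 1 - (n - 1 - j) = j by omega] at hbo2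
          have hgoal : lineState m n β f (m - (k + 1)) j = bot j := by
            rw [show m - (k + 1) = m - k - 1 by omega]
          rw [hgoal, hbo2]
          by_cases hlt : (cEx β π i₀ : ℕ) < j
          · rw [if_pos (by omega : n - 1 - j < q)]
            have hT2 : T' (n - 1 - j) = lineState m n β f (m - k) j := by
              rw [hT'_def]
              simp only []
              rw [show n - 1 - (n - 1 - j) = j by omega]
            rw [hT2, ihT j hj i]
            constructor
            · rintro ⟨h1, h2⟩
              refine ⟨?_, h2⟩
              rcases Nat.eq_or_lt_of_le h1 with he | hlt2
              · exfalso
                have hii : i = i₀ := Fin.ext (by omega)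
                rw [hii] at h2
                omega
              · omega
            · rintro ⟨h1, h2⟩
              exact ⟨by omega, h2⟩
          · rw [if_neg (by omega : ¬ n - 1 - j < q)]
            constructor
            · intro h; exact absurd h (by simp)
            · rintro ⟨h1, h2⟩
              exfalso
              have hlt3 : cEx β π i₀ < cEx β π i :=
                cEx_lt_of_bot hdec (by rw [Fin.lt_def]; omega) hβ
              rw [Fin.lt_def] at hlt3
              omega
        · -- rows up to k are canonical
          intro i hik j
          rcases Nat.lt_or_ge (i : ℕ) k with hlt | hge
          · exact ihrows i hlt j
          · have hii : i = i₀ := Fin.ext (by omega)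
            rw [hii]
            have hjn := j.isLt
            have hmir : f i₀ j = ((tilesOf f i₀ (n - 1 - (n - 1 - (j : ℕ)))).mirror).mirror := by
              rw [show n - 1 - (n - 1 - (j : ℕ)) = (j : ℕ) by omega, Tile.mirror_mirror]
              simp only [tilesOf, dif_pos hjn]
            rw [hmir, hti (n - 1 - (j : ℕ)) (by omega)]
            rw [canon_eq_bot hβ]
            by_cases h1 : (j : ℕ) = (cEx β π i₀ : ℕ)
            · rw [if_pos (by omega : n - 1 - (j : ℕ) = q), if_pos h1]
              rfl
            · rw [if_neg (by omega : ¬ n - 1 - (j : ℕ) = q), if_neg h1]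
              have hTiff : (T' (n - 1 - (j : ℕ))).isSome = true ↔
                  passesC β π i₀ (j : ℕ) := by
                rw [hT'_def]
                simp only []
                rw [show n - 1 - (n - 1 - (j : ℕ)) = (j : ℕ) by omega]
                rw [Option.isSome_iff_exists]
                constructor
                · rintro ⟨i', hi'⟩
                  have hmem := (ihT (j : ℕ) hjn i').mp hi'
                  refine ⟨i', ?_, hmem.2⟩
                  rw [Fin.lt_def]
                  rcases Nat.eq_or_lt_of_le hmem.1 with he | hlt2
                  · exfalso
                    have hii : i' = i₀ := Fin.ext (by omega)
                    rw [hii] at hi'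
                    have h2 := ((ihT (j : ℕ) hjn i₀).mp hi').2
                    omega
                  · omega
                · rintro ⟨i', hlt2, hc2⟩
                  rw [Fin.lt_def] at hlt2
                  exact ⟨i', (ihT (j : ℕ) hjn i').mpr ⟨by omega, hc2⟩⟩
              by_cases h2 : passesC β π i₀ (j : ℕ)
              · rw [if_pos (hTiff.mpr h2), if_pos h2]
                rfl
              · rw [if_neg (fun hs => h2 (hTiff.mp hs)), if_neg h2]
                by_cases h3 : (cEx β π i₀ : ℕ) < (j : ℕ)
                · rw [if_pos (by omega : n - 1 - (j : ℕ) < q), if_pos h3]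
                  rfl
                · rw [if_neg (by omega : ¬ n - 1 - (j : ℕ) < q), if_neg h3]
                  rfl
      · -- top-type row
        set q : ℕ := (cEx β π i₀ : ℕ) with hq_def
        have hqn : q < n := (cEx β π i₀).isLt
        have hrh := rowHyp_top hf hn hβ hbots
        have htop : ∀ j < n, topOutT (tilesOf f i₀) bot (some i₀) j = T j := by
          intro j hj
          rw [hrow j]
          simp only [rowTop, hβ, if_true]
        have hTq : T q = some i₀ := (ihT q hqn i₀).mpr ⟨le_refl _, rfl⟩
        have hTnone : ∀ j < n, q < j → T j = none := by
          intro j hj hqj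
          rcases hopt : T j with _ | i
          · rfl
          · exfalso
            have hmem := (ihT j hj i).mp hopt
            rcases Nat.eq_or_lt_of_le hmem.1 with he | hlt
            · have hii : i = i₀ := Fin.ext (by omega)
              rw [hii] at hopt
              have h2 := ((ihT j hj i₀).mp hopt).2
              omega
            · have hlt3 : cEx β π i < cEx β π i₀ :=
                cEx_lt_of_top hdec (by rw [Fin.lt_def]; omega) hβ
              rw [Fin.lt_def] at hlt3
              omega
        obtain ⟨hti, hbo⟩ := row_unique hrh hqn T htop hTq hTnone hbote
        refine ⟨?_, ?_⟩
        · intro j hj i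
          have hgoal : lineState m n β f (m - (k + 1)) j = bot j := by
            rw [show m - (k + 1) = m - k - 1 by omega]
          rw [hgoal, hbo j hj]
          by_cases hlt : j < q
          · have hT2 : T j = lineState m n β f (m - k) j := rfl
            rw [if_pos hlt, hT2, ihT j hj i]
            constructor
            · rintro ⟨h1, h2⟩
              refine ⟨?_, h2⟩
              rcases Nat.eq_or_lt_of_le h1 with he | hlt2
              · exfalso
                have hii : i = i₀ := Fin.ext (by omega)
                rw [hii] at h2
                omega
              · omega
            · rintro ⟨h1, h2⟩
              exact ⟨by omega, h2⟩
          · rw [if_neg hlt]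
            constructor
            · intro h; exact absurd h (by simp)
            · rintro ⟨h1, h2⟩
              exfalso
              have hlt3 : cEx β π i < cEx β π i₀ :=
                cEx_lt_of_top hdec (by rw [Fin.lt_def]; omega) hβ
              rw [Fin.lt_def] at hlt3
              omega
        · intro i hik j
          rcases Nat.lt_or_ge (i : ℕ) k with hlt | hge
          · exact ihrows i hlt j
          · have hii : i = i₀ := Fin.ext (by omega)
            rw [hii]
            have hjn := j.isLt
            have hof : f i₀ j = tilesOf f i₀ (j : ℕ) := by
              simp only [tilesOf, dif_pos hjn]
            rw [hof, hti (j : ℕ) hjn, canon_eq_top hβ]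
            by_cases h1 : (j : ℕ) = q
            · rw [if_pos h1, if_pos h1]
            · rw [if_neg h1, if_neg h1]
              have hTiff : (T (j : ℕ)).isSome = true ↔ passesC β π i₀ (j : ℕ) := by
                rw [Option.isSome_iff_exists]
                constructor
                · rintro ⟨i', hi'⟩
                  have hmem := (ihT (j : ℕ) hjn i').mp hi'
                  refine ⟨i', ?_, hmem.2⟩
                  rw [Fin.lt_def]
                  rcases Nat.eq_or_lt_of_le hmem.1 with he | hlt2
                  · exfalso
                    have hii' : i' = i₀ := Fin.ext (by omega)
                    rw [hii'] at hi'
                    have h2 := ((ihT (j : ℕ) hjn i₀).mp hi').2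
                    omega
                  · omega
                · rintro ⟨i', hlt2, hc2⟩
                  rw [Fin.lt_def] at hlt2
                  exact ⟨i', (ihT (j : ℕ) hjn i').mpr ⟨by omega, hc2⟩⟩
              by_cases h2 : passesC β π i₀ (j : ℕ)
              · rw [if_pos (hTiff.mpr h2), if_pos h2]
              · rw [if_neg (fun hs => h2 (hTiff.mp hs)), if_neg h2]
  funext i j
  exact (key m le_rfl).2 i i.isLt j

end DecU

end Unique

section Weight

theorem prod_split {M : Type*} [CommMonoid M] {n : ℕ} (c : Fin n) (F : Fin n → M)
    (E : M) (P Q : Fin n → M)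
    (hc : F c = E) (hlt : ∀ j, j < c → F j = P j) (hgt : ∀ j, c < j → F j = Q j) :
    ∏ j, F j =
      E * (∏ j ∈ Finset.univ.filter (fun j : Fin n => j < c), P j) *
        ∏ j ∈ Finset.univ.filter (fun j : Fin n => c < j), Q j := by
  classical
  have e1 : Finset.univ.filter (fun j : Fin n => j = c) = {c} := by
    ext j; simp
  have e2 : Finset.univ.filter (fun j : Fin n => ¬ j = c) =
      Finset.univ.filter (fun j : Fin n => j < c) ∪
        Finset.univ.filter (fun j : Fin n => c < j) := by
    ext j
    simp only [Finset.mem_filter, Finset.mem_univ, true_and, Finset.mem_union]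
    rw [Fin.ext_iff, Fin.lt_def, Fin.lt_def]
    omega
  have hdisj : Disjoint (Finset.univ.filter (fun j : Fin n => j < c))
      (Finset.univ.filter (fun j : Fin n => c < j)) := by
    rw [Finset.disjoint_left]
    intro a ha hb
    rw [Finset.mem_filter] at ha hb
    rw [Fin.lt_def] at ha hb
    omega
  calc ∏ j, F j
      = (∏ j ∈ Finset.univ.filter (fun j : Fin n => j = c), F j) *
        ∏ j ∈ Finset.univ.filter (fun j : Fin n => ¬ j = c), F j :=
        (Finset.prod_filter_mul_prod_filter_not _ _ _).symm
    _ = E * ((∏ j ∈ Finset.univ.filter (fun j : Fin n => j < c), P j) *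
        ∏ j ∈ Finset.univ.filter (fun j : Fin n => c < j), Q j) := by
        rw [e1, Finset.prod_singleton, hc, e2, Finset.prod_union hdisj]
        congr 1
        congr 1
        · apply Finset.prod_congr rfl
          intro j hj
          rw [Finset.mem_filter] at hj
          exact hlt j hj.2
        · apply Finset.prod_congr rfl
          intro j hj
          rw [Finset.mem_filter] at hj
          exact hgt j hj.2
    _ = _ := by rw [mul_assoc]

variable (hdec : ∀ i i' : Fin m, i < i' → π i' < π i)

include hdec

theorem pdWeight_canon :
    pdWeight m n β (canonPD β π) =
      ∏ i : Fin m,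
        ((AP m n + BP m n) *
          (∏ j ∈ Finset.univ.filter (fun j : Fin n => j < π i),
            (AP m n + xP m n i - yP m n j)) *
          ∏ j ∈ Finset.univ.filter (fun j : Fin n => π i < j),
            (BP m n - xP m n i + yP m n j)) := by
  rw [pdWeight]
  have hrow : ∀ i : Fin m,
      ∏ j : Fin n, tileWt m n (β i) (canonPD β π i j) (pipeNo β i) j =
        (AP m n + BP m n) *
          (∏ j ∈ Finset.univ.filter (fun j : Fin n => j < π (pipeNo β i)),
            (AP m n + xP m n (pipeNo β i) - yP m n j)) *
          ∏ j ∈ Finset.univ.filter (fun j : Fin n => π (pipeNo β i) < j),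
            (BP m n - xP m n (pipeNo β i) + yP m n j) := by
    intro i
    have hcp : π (pipeNo β i) = cEx β π i := rfl
    rw [hcp]
    apply prod_split (cEx β π i)
    · -- the elbow at the exit column
      rcases hβ : β i with _ | _
      · rw [canon_eq_bot hβ, if_pos rfl]
        rfl
      · rw [canon_eq_top hβ, if_pos rfl]
        rfl
    · intro j hjc
      rw [Fin.lt_def] at hjc
      rcases hβ : β i with _ | _
      · rw [canon_eq_bot hβ, if_neg (by omega), if_neg (fun hp =>
          absurd (passesC_lt_bot hdec hβ hp) (by omega)), if_neg (by omega)]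
        rfl
      · rw [canon_eq_top hβ, if_neg (by omega)]
        by_cases hp : passesC β π i (j : ℕ)
        · rw [if_pos hp]; rfl
        · rw [if_neg hp, if_pos hjc]; rfl
    · intro j hjc
      rw [Fin.lt_def] at hjc
      rcases hβ : β i with _ | _
      · rw [canon_eq_bot hβ, if_neg (by omega)]
        by_cases hp : passesC β π i (j : ℕ)
        · rw [if_pos hp]; rfl
        · rw [if_neg hp, if_pos hjc]; rfl
      · rw [canon_eq_top hβ, if_neg (by omega), if_neg (fun hp =>
          absurd (passesC_lt_top hdec hβ hp) (by omega)), if_neg (by omega)]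
        rfl
  calc ∏ i : Fin m, ∏ j : Fin n, tileWt m n (β i) (canonPD β π i j) (pipeNo β i) j
      = ∏ i : Fin m,
          ((AP m n + BP m n) *
            (∏ j ∈ Finset.univ.filter (fun j : Fin n => j < π (pipeNo β i)),
              (AP m n + xP m n (pipeNo β i) - yP m n j)) *
            ∏ j ∈ Finset.univ.filter (fun j : Fin n => π (pipeNo β i) < j),
              (BP m n - xP m n (pipeNo β i) + yP m n j)) :=
        Finset.prod_congr rfl (fun i _ => hrow i)
    _ = _ := by
        apply Fintype.prod_bijective (pipeNo β)
          (Finite.injective_iff_bijective.mp (pipeNo_injective β))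
        intro i
        rfl

end Weight

end Aux

/-- For decreasing `π`, the generic pipe dream polynomial is the explicit product
`∏_i (A+B) ∏_{j<π(i)} (A+x_i−y_j) ∏_{j>π(i)} (B−x_i+y_j)`. -/
theorem GPD_decreasing (m n : ℕ) (hm : 1 ≤ m) (hmn : m ≤ n)
    (β : Fin m → Bool) (π : Fin m ↪ Fin n)
    (hdec : ∀ i i' : Fin m, i < i' → π i' < π i) :
    GPD m n β π =
      ∏ i : Fin m,
        ((AP m n + BP m n) *
          (∏ j ∈ Finset.univ.filter (fun j : Fin n => j < π i),
            (AP m n + xP m n i - yP m n j)) *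
          ∏ j ∈ Finset.univ.filter (fun j : Fin n => π i < j),
            (BP m n - xP m n i + yP m n j)) := by
  classical
  have hn : 0 < n := lt_of_lt_of_le hm hmn
  rw [GPD]
  rw [Finset.sum_eq_single_of_mem (canonPD β π)]
  · exact pdWeight_canon hdec
  · rw [Finset.mem_filter]
    exact ⟨Finset.mem_univ _, isHGPD_canon hdec, connectivity_canon hdec⟩
  · intro g hg hgne
    rw [Finset.mem_filter] at hg
    exact absurd (hgpd_unique hdec hg.2.1 hg.2.2 hm hn) hgne
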